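/- Let d ≥ 1, let Λ be a finitely generated additive submonoid of (Fin d → ℕ), and let n, n' : Fin d → ℕ both satisfy ⟨n,u⟩ > 0 and ⟨n',u⟩ > 0 for every u ∈ Λ with u ≠ 0. Then the associated graded rings ⨁_{k} p_k(n)/p_{k+1}(n) and ⨁_{k} p_k(n')/p_{k+1}(n'), regarded as ℂ-algebras without their gradings, are isomorphic (both being isomorphic to AddMonoidAlgebra ℂ Λ), by an isomorphism matching the maximal graded ideals ⨁_{k ≥ 1} p_k(n)/p_{k+1}(n) and ⨁_{k ≥ 1} p_k(n')/p_{k+1}(n'). -/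

import Mathlib

noncomputable section

/-- Coefficient of a multivariate power series at an exponent `u : Fin d → ℕ`. -/
def coeffFun (d : ℕ) (φ : MvPowerSeries (Fin d) ℂ) (u : Fin d → ℕ) : ℂ :=
  MvPowerSeries.coeff (Finsupp.equivFunOnFinite.symm u) φ

/-- Support of a multivariate power series, as a set of exponents `u : Fin d → ℕ`. -/
def suppS (d : ℕ) (φ : MvPowerSeries (Fin d) ℂ) : Set (Fin d → ℕ) :=
  {u | coeffFun d φ u ≠ 0}

/-- The weight `⟨n,u⟩ = ∑ i, n i * u i`. -/
def wt {d : ℕ} (n u : Fin d → ℕ) : ℕ := ∑ i, n i * u i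

/-- The `n`-weighted order of a power series: the least weight of an exponent
in its support (junk value `0` for `φ = 0`, by `Nat.sInf_empty`). -/
def ordn (d : ℕ) (n : Fin d → ℕ) (φ : MvPowerSeries (Fin d) ℂ) : ℕ :=
  sInf (wt n '' suppS d φ)

lemma suppS_add (d : ℕ) (φ ψ : MvPowerSeries (Fin d) ℂ) :
    suppS d (φ + ψ) ⊆ suppS d φ ∪ suppS d ψ := by
  intro u hu
  by_contra h
  simp only [Set.mem_union, suppS, Set.mem_setOf_eq, not_or, not_not] at h hu
  apply hu
  show coeffFun d (φ + ψ) u = 0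
  have : coeffFun d (φ + ψ) u = coeffFun d φ u + coeffFun d ψ u := by
    simp [coeffFun, map_add]
  rw [this, h.1, h.2, add_zero]

/-- `ℂ[[Λ]]`: the subalgebra of `MvPowerSeries (Fin d) ℂ` of series with support
contained in the additive submonoid `Λ`; it is the analytic algebra of the germ
of the affine toric variety `Z^Λ = Spec ℂ[Λ]` at its zero-dimensional orbit. -/
def RL (d : ℕ) (Λ : AddSubmonoid (Fin d → ℕ)) : Subalgebra ℂ (MvPowerSeries (Fin d) ℂ) where
  carrier := {φ | suppS d φ ⊆ (Λ : Set (Fin d → ℕ))}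
  zero_mem' := by
    intro u hu
    exact absurd (by simp [coeffFun]) hu
  one_mem' := by
    intro u hu
    have h : coeffFun d 1 u ≠ 0 := hu
    rw [coeffFun, MvPowerSeries.coeff_one] at h
    have : Finsupp.equivFunOnFinite.symm u = 0 := by
      by_contra hne; exact h (if_neg hne)
    have hu0 : u = 0 := by
      have := congrArg Finsupp.equivFunOnFinite this
      rw [Equiv.apply_symm_apply] at this
      exact this.trans (funext fun _ => rfl)
    rw [hu0]; exact Λ.zero_mem
  add_mem' := by
    intro φ ψ hφ hψ u hu
    rcases suppS_add d φ ψ hu with h | h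
    · exact hφ h
    · exact hψ h
  mul_mem' := by
    intro φ ψ hφ hψ u hu
    have h : coeffFun d (φ * ψ) u ≠ 0 := hu
    rw [coeffFun, MvPowerSeries.coeff_mul] at h
    obtain ⟨p, hp, hne⟩ := Finset.exists_ne_zero_of_sum_ne_zero h
    first
      | rw [Finset.HasAntidiagonal.mem_antidiagonal] at hp
      | simp only [Finset.mem_antidiagonal] at hp
    have h1 : Finsupp.equivFunOnFinite p.1 ∈ Λ := by
      apply hφ
      show coeffFun d φ _ ≠ 0
      rw [coeffFun, Equiv.symm_apply_apply]
      exact left_ne_zero_of_mul hne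
    have h2 : Finsupp.equivFunOnFinite p.2 ∈ Λ := by
      apply hψ
      show coeffFun d ψ _ ≠ 0
      rw [coeffFun, Equiv.symm_apply_apply]
      exact right_ne_zero_of_mul hne
    have hsum : Finsupp.equivFunOnFinite p.1 + Finsupp.equivFunOnFinite p.2 = u := by
      have := congrArg Finsupp.equivFunOnFinite hp
      rw [Equiv.apply_symm_apply] at this
      rw [← this]
      exact (Finsupp.coe_add p.1 p.2).symm
    rw [← hsum]
    exact Λ.add_mem h1 h2
  algebraMap_mem' := by
    intro c u hu
    have h : coeffFun d (algebraMap ℂ (MvPowerSeries (Fin d) ℂ) c) u ≠ 0 := hu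
    rw [coeffFun] at h
    rw [show (algebraMap ℂ (MvPowerSeries (Fin d) ℂ) c) = (MvPowerSeries.C c : MvPowerSeries (Fin d) ℂ) from rfl,
      MvPowerSeries.coeff_C] at h
    have : Finsupp.equivFunOnFinite.symm u = 0 := by
      by_contra hne; exact h (if_neg hne)
    have hu0 : u = 0 := by
      have := congrArg Finsupp.equivFunOnFinite this
      rw [Equiv.apply_symm_apply] at this
      exact this.trans (funext fun _ => rfl)
    rw [hu0]; exact Λ.zero_mem

lemma suppS_nonempty (d : ℕ) (φ : MvPowerSeries (Fin d) ℂ) (hφ : φ ≠ 0) :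
    (suppS d φ).Nonempty := by
  have : ∃ v : Fin d →₀ ℕ, MvPowerSeries.coeff v φ ≠ 0 := by
    by_contra h
    push_neg at h
    exact hφ (MvPowerSeries.ext h)
  obtain ⟨v, hv⟩ := this
  refine ⟨Finsupp.equivFunOnFinite v, ?_⟩
  show coeffFun d φ _ ≠ 0
  rw [coeffFun, Equiv.symm_apply_apply]
  exact hv

lemma ordn_le (d : ℕ) (n : Fin d → ℕ) (φ : MvPowerSeries (Fin d) ℂ) (u : Fin d → ℕ)
    (hu : u ∈ suppS d φ) : ordn d n φ ≤ wt n u :=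
  Nat.sInf_le ⟨u, hu, rfl⟩

lemma le_ordn (d : ℕ) (n : Fin d → ℕ) (φ : MvPowerSeries (Fin d) ℂ) (k : ℕ) (hφ : φ ≠ 0)
    (h : ∀ u ∈ suppS d φ, k ≤ wt n u) : k ≤ ordn d n φ := by
  apply le_csInf
  · exact (suppS_nonempty d φ hφ).image _
  · rintro b ⟨u, hu, rfl⟩
    exact h u hu

lemma suppS_smul (d : ℕ) (c : ℂ) (φ : MvPowerSeries (Fin d) ℂ) :
    suppS d (c • φ) ⊆ suppS d φ := by
  intro u hu
  have h : coeffFun d (c • φ) u ≠ 0 := hu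
  have : coeffFun d (c • φ) u = c * coeffFun d φ u := by
    simp [coeffFun]
  rw [this] at h
  exact right_ne_zero_of_mul h

/-- The `k`-th step `p_k = {φ ∈ R | φ = 0 ∨ ord_n φ ≥ k}` of the filtration of a
subalgebra `R` of the power series ring induced by the `n`-weighted order,
as a `ℂ`-submodule of the power series ring. -/
def pP (d : ℕ) (R : Subalgebra ℂ (MvPowerSeries (Fin d) ℂ)) (n : Fin d → ℕ) (k : ℕ) :
    Submodule ℂ (MvPowerSeries (Fin d) ℂ) where
  carrier := {φ | φ ∈ R ∧ (φ = 0 ∨ k ≤ ordn d n φ)}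
  zero_mem' := ⟨R.zero_mem, Or.inl rfl⟩
  add_mem' := by
    rintro φ ψ ⟨hφR, hφ⟩ ⟨hψR, hψ⟩
    refine ⟨R.add_mem hφR hψR, ?_⟩
    by_cases h0 : φ + ψ = 0
    · exact Or.inl h0
    · refine Or.inr (le_ordn d n _ k h0 ?_)
      intro u hu
      rcases suppS_add d φ ψ hu with h | h
      · rcases hφ with h1 | h1
        · exact absurd h (by simp [h1, suppS, coeffFun])
        · exact le_trans h1 (ordn_le d n φ u h)
      · rcases hψ with h1 | h1
        · exact absurd h (by simp [h1, suppS, coeffFun])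
        · exact le_trans h1 (ordn_le d n ψ u h)
  smul_mem' := by
    rintro c φ ⟨hφR, hφ⟩
    refine ⟨R.smul_mem hφR c, ?_⟩
    by_cases h0 : c • φ = 0
    · exact Or.inl h0
    · refine Or.inr ?_
      rcases hφ with h1 | h1
      · exact absurd (by rw [h1, smul_zero]) h0
      · refine le_ordn d n _ k h0 ?_
        intro u hu
        exact le_trans h1 (ordn_le d n φ u (suppS_smul d c φ hu))

/-- The quotient module `p_k / p_{k+1}`. -/
abbrev grPiece (d : ℕ) (R : Subalgebra ℂ (MvPowerSeries (Fin d) ℂ)) (n : Fin d → ℕ)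
    (k : ℕ) :=
  ↥(pP d R n k) ⧸ (pP d R n (k + 1)).comap (pP d R n k).subtype

/-- `H_k`: the `ℂ`-span in `AddMonoidAlgebra ℂ Λ` of the monomials `X^u`
with `u ∈ Λ` and `⟨n,u⟩ = k`. -/
def HkSub (d : ℕ) (Λ : AddSubmonoid (Fin d → ℕ)) (n : Fin d → ℕ) (k : ℕ) :
    Submodule ℂ (AddMonoidAlgebra ℂ ↥Λ) :=
  Submodule.span ℂ {x | ∃ u : ↥Λ, wt n (u : Fin d → ℕ) = k ∧ x = AddMonoidAlgebra.single u 1}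

/-- The maximal graded ideal `𝔪_Λ` of `AddMonoidAlgebra ℂ Λ`, spanned by the
monomials `X^u` with `u ∈ Λ`, `u ≠ 0`. -/
def mIdl (d : ℕ) (Λ : AddSubmonoid (Fin d → ℕ)) : Ideal (AddMonoidAlgebra ℂ ↥Λ) :=
  Ideal.span {x | ∃ u : ↥Λ, u ≠ 0 ∧ x = AddMonoidAlgebra.single u 1}

/-- The family `e` of `ℂ`-linear isomorphisms `p_k/p_{k+1} ≃ H_k` realizes the canonical
graded isomorphism `gr R ≅ ℂ[Λ]`: each `e k` sends the class of `φ` to its `n`-initial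
form `in_n φ` (and the zero class to `0`), and the family is unital and multiplicative
with respect to the multiplication induced by that of `R`. -/
def IsGradedInitialFormIso (d : ℕ) (R : Subalgebra ℂ (MvPowerSeries (Fin d) ℂ))
    (Λ : AddSubmonoid (Fin d → ℕ)) (n : Fin d → ℕ)
    (e : ∀ k : ℕ, grPiece d R n k ≃ₗ[ℂ] ↥(HkSub d Λ n k)) : Prop :=
  (∀ (k : ℕ) (φ : MvPowerSeries (Fin d) ℂ) (hφ : φ ∈ pP d R n k),
      (fun u : ↥Λ =>
        ((e k (Submodule.Quotient.mk ⟨φ, hφ⟩) : ↥(HkSub d Λ n k)) :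
          AddMonoidAlgebra ℂ ↥Λ).coeff u) =
        fun u : ↥Λ => if wt n (u : Fin d → ℕ) = k then coeffFun d φ (u : Fin d → ℕ) else 0) ∧
  (∀ (k l : ℕ) (φ ψ : MvPowerSeries (Fin d) ℂ) (hφ : φ ∈ pP d R n k)
      (hψ : ψ ∈ pP d R n l) (hφψ : φ * ψ ∈ pP d R n (k + l)),
      ((e (k + l) (Submodule.Quotient.mk ⟨φ * ψ, hφψ⟩) : ↥(HkSub d Λ n (k + l))) :
          AddMonoidAlgebra ℂ ↥Λ) =
        ((e k (Submodule.Quotient.mk ⟨φ, hφ⟩) : ↥(HkSub d Λ n k)) : AddMonoidAlgebra ℂ ↥Λ) *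
        ((e l (Submodule.Quotient.mk ⟨ψ, hψ⟩) : ↥(HkSub d Λ n l)) : AddMonoidAlgebra ℂ ↥Λ)) ∧
  (∀ h1 : (1 : MvPowerSeries (Fin d) ℂ) ∈ pP d R n 0,
      ((e 0 (Submodule.Quotient.mk ⟨1, h1⟩) : ↥(HkSub d Λ n 0)) : AddMonoidAlgebra ℂ ↥Λ) =
        1)


namespace GrAux

variable {d : ℕ}

lemma wt_add (n u v : Fin d → ℕ) : wt n (u + v) = wt n u + wt n v := by
  simp [wt, Pi.add_apply, mul_add, Finset.sum_add_distrib]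

lemma wt_zero (n : Fin d → ℕ) : wt n (0 : Fin d → ℕ) = 0 := by simp [wt]

lemma wt_smul (n : Fin d → ℕ) (c : ℕ) (u : Fin d → ℕ) : wt n (c • u) = c * wt n u := by
  simp only [wt, Finset.mul_sum, Pi.smul_apply, smul_eq_mul]
  exact Finset.sum_congr rfl fun i _ => by ring

/-- `wt n` as an additive monoid hom. -/
def wtHom (n : Fin d → ℕ) : (Fin d → ℕ) →+ ℕ where
  toFun := wt n
  map_zero' := wt_zero n
  map_add' := wt_add n

lemma coeffFun_eq (φ : MvPowerSeries (Fin d) ℂ) (v : Fin d →₀ ℕ) :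
    coeffFun d φ (Finsupp.equivFunOnFinite v) = MvPowerSeries.coeff v φ := by
  simp [coeffFun]

lemma eqf_symm_add (u v : Fin d → ℕ) :
    Finsupp.equivFunOnFinite.symm (u + v)
      = Finsupp.equivFunOnFinite.symm u + Finsupp.equivFunOnFinite.symm v := by
  ext i; simp

lemma wtfin (Λ : AddSubmonoid (Fin d → ℕ)) (hΛ : Λ.FG) (n : Fin d → ℕ)
    (hn : ∀ u ∈ Λ, u ≠ 0 → 0 < wt n u) (k : ℕ) :
    {u : ↥Λ | wt n (u : Fin d → ℕ) = k}.Finite := by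
  obtain ⟨T, hT⟩ := hΛ
  have key : {u : Fin d → ℕ | u ∈ Λ ∧ wt n u = k}.Finite := by
    have hsub : {u : Fin d → ℕ | u ∈ Λ ∧ wt n u = k} ⊆
        Set.range (fun m : {x // x ∈ T} → Fin (k+1) =>
          ∑ t ∈ T.attach, ((m t : ℕ)) • (t : Fin d → ℕ)) := by
      rintro u ⟨huΛ, huk⟩
      rw [← hT] at huΛ
      obtain ⟨mset, hmem, hsum⟩ := AddSubmonoid.exists_multiset_of_mem_closure huΛ
      have hsum' : ∑ a ∈ mset.toFinset, mset.count a • a = u := by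
        have := (Finset.sum_multiset_map_count mset id).symm
        rw [Multiset.map_id] at this
        simpa using this.trans hsum
      have htsub : mset.toFinset ⊆ T := fun a ha => hmem a (Multiset.mem_toFinset.mp ha)
      have hTsum : ∑ a ∈ T, mset.count a • a = u := by
        rw [← hsum']
        refine (Finset.sum_subset htsub ?_).symm
        intro x _ hnx
        rw [Multiset.count_eq_zero_of_notMem (fun h => hnx (Multiset.mem_toFinset.mpr h))]
        simp
      have hbound : ∀ t ∈ T, (t : Fin d → ℕ) ≠ 0 → mset.count t ≤ k := by
        intro t htT ht0
        have hwt : ∑ a ∈ T, mset.count a * wt n a = k := by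
          rw [← huk, ← hTsum]
          show _ = wtHom n _
          rw [map_sum]
          refine Finset.sum_congr rfl fun a _ => ?_
          show mset.count a * wt n a = wtHom n (mset.count a • a)
          rw [map_nsmul]
          simp [wtHom]
        have h1 : 1 ≤ wt n t := hn t (hT ▸ AddSubmonoid.subset_closure htT) ht0
        calc mset.count t ≤ mset.count t * wt n t := Nat.le_mul_of_pos_right _ h1
          _ ≤ ∑ a ∈ T, mset.count a * wt n a :=
              Finset.single_le_sum (f := fun a => mset.count a * wt n a)
                (fun a _ => Nat.zero_le _) htT
          _ = k := hwt
      set m : {x // x ∈ T} → Fin (k+1) := fun t =>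
        if h : (t : Fin d → ℕ) = 0 then ⟨0, Nat.succ_pos k⟩
        else ⟨mset.count (t : Fin d → ℕ), Nat.lt_succ_of_le (hbound t t.2 h)⟩ with hm
      refine ⟨m, ?_⟩
      rw [← hTsum, ← Finset.sum_attach T (fun a => mset.count a • a)]
      refine Finset.sum_congr rfl fun t _ => ?_
      by_cases h : (t : Fin d → ℕ) = 0
      · rw [h]; simp
      · have : ((m t : ℕ)) = mset.count (t : Fin d → ℕ) := by rw [hm]; simp [h]
        rw [this]
    exact (Set.finite_range _).subset hsub
  have heq : {u : ↥Λ | wt n (u : Fin d → ℕ) = k}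
      = Subtype.val ⁻¹' {u : Fin d → ℕ | u ∈ Λ ∧ wt n u = k} := by
    ext u; simp [u.2]
  rw [heq]
  exact key.preimage Subtype.val_injective.injOn


section Main

variable (Λ : AddSubmonoid (Fin d → ℕ)) (hΛ : Λ.FG) (n : Fin d → ℕ)
  (hn : ∀ u ∈ Λ, u ≠ 0 → 0 < wt n u)

lemma coeffFun_add' (φ ψ : MvPowerSeries (Fin d) ℂ) (u : Fin d → ℕ) :
    coeffFun d (φ + ψ) u = coeffFun d φ u + coeffFun d ψ u := by simp [coeffFun]

lemma coeffFun_smul' (c : ℂ) (φ : MvPowerSeries (Fin d) ℂ) (u : Fin d → ℕ) :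
    coeffFun d (c • φ) u = c * coeffFun d φ u := by simp [coeffFun]

lemma coeffFun_zero (u : Fin d → ℕ) : coeffFun d (0 : MvPowerSeries (Fin d) ℂ) u = 0 := by
  simp [coeffFun]

lemma mem_RL {φ : MvPowerSeries (Fin d) ℂ} : φ ∈ RL d Λ ↔ suppS d φ ⊆ (Λ : Set (Fin d → ℕ)) :=
  Iff.rfl

/-- `φ ∈ p_k` implies every exponent in the support has weight `≥ k`. -/
lemma wt_supp_ge {k : ℕ} {φ : MvPowerSeries (Fin d) ℂ} (hφ : φ ∈ pP d (RL d Λ) n k)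
    {u : Fin d → ℕ} (hu : u ∈ suppS d φ) : k ≤ wt n u := by
  rcases hφ.2 with h0 | h0
  · exact absurd hu (by simp [h0, suppS, coeffFun_zero])
  · exact le_trans h0 (ordn_le d n φ u hu)

lemma mem_pP_of_supp {k : ℕ} {φ : MvPowerSeries (Fin d) ℂ} (hR : φ ∈ RL d Λ)
    (h : ∀ u ∈ suppS d φ, k ≤ wt n u) : φ ∈ pP d (RL d Λ) n k := by
  refine ⟨hR, ?_⟩
  by_cases h0 : φ = 0
  · exact Or.inl h0
  · exact Or.inr (le_ordn d n φ k h0 h)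

def Sk (k : ℕ) : Finset ↥Λ := (wtfin Λ hΛ n hn k).toFinset

lemma mem_Sk {k : ℕ} {u : ↥Λ} : u ∈ Sk Λ hΛ n hn k ↔ wt n (u : Fin d → ℕ) = k :=
  Set.Finite.mem_toFinset _

/-- The `n`-initial form in degree `k`. -/
def inF (k : ℕ) (φ : MvPowerSeries (Fin d) ℂ) : AddMonoidAlgebra ℂ ↥Λ :=
  ∑ u ∈ Sk Λ hΛ n hn k, AddMonoidAlgebra.single u (coeffFun d φ (u : Fin d → ℕ))

lemma inF_apply (k : ℕ) (φ : MvPowerSeries (Fin d) ℂ) (u : ↥Λ) :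
    (inF Λ hΛ n hn k φ).coeff u
      = if wt n (u : Fin d → ℕ) = k then coeffFun d φ (u : Fin d → ℕ) else 0 := by
  classical
  rw [inF, AddMonoidAlgebra.coeff_sum, Finsupp.finset_sum_apply]
  rw [Finset.sum_congr rfl (fun v _ => AddMonoidAlgebra.coeff_single_apply)]
  rw [Finset.sum_ite_eq' (Sk Λ hΛ n hn k) u (fun v => coeffFun d φ (v : Fin d → ℕ))]
  by_cases h : u ∈ Sk Λ hΛ n hn k
  · rw [if_pos h, if_pos ((mem_Sk Λ hΛ n hn).mp h)]
  · rw [if_neg h, if_neg (fun hw => h ((mem_Sk Λ hΛ n hn).mpr hw))]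

lemma inF_mem (k : ℕ) (φ : MvPowerSeries (Fin d) ℂ) :
    inF Λ hΛ n hn k φ ∈ HkSub d Λ n k := by
  refine Submodule.sum_mem _ fun u hu => ?_
  have : AddMonoidAlgebra.single u (coeffFun d φ (u : Fin d → ℕ))
      = coeffFun d φ (u : Fin d → ℕ) • AddMonoidAlgebra.single u (1 : ℂ) := by
    rw [AddMonoidAlgebra.smul_single', mul_one]
  rw [this]
  exact Submodule.smul_mem _ _ (Submodule.subset_span ⟨u, (mem_Sk Λ hΛ n hn).mp hu, rfl⟩)

/-- The initial form as a linear map on `p_k`. -/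
def inL0 (k : ℕ) : ↥(pP d (RL d Λ) n k) →ₗ[ℂ] AddMonoidAlgebra ℂ ↥Λ where
  toFun φ := inF Λ hΛ n hn k φ.1
  map_add' x y := by
    apply AddMonoidAlgebra.ext; apply Finsupp.ext; intro u
    rw [AddMonoidAlgebra.coeff_add, Finsupp.add_apply]
    simp only [Submodule.coe_add, inF_apply, coeffFun_add']
    split <;> simp
  map_smul' c x := by
    apply AddMonoidAlgebra.ext; apply Finsupp.ext; intro u
    rw [RingHom.id_apply, AddMonoidAlgebra.coeff_smul, Finsupp.smul_apply]
    simp only [SetLike.val_smul, inF_apply, coeffFun_smul']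
    split <;> simp

def inL (k : ℕ) : ↥(pP d (RL d Λ) n k) →ₗ[ℂ] ↥(HkSub d Λ n k) :=
  LinearMap.codRestrict (HkSub d Λ n k) (inL0 Λ hΛ n hn k)
    (fun φ => inF_mem Λ hΛ n hn k φ.1)

lemma inL_coe (k : ℕ) (φ : ↥(pP d (RL d Λ) n k)) :
    (inL Λ hΛ n hn k φ : AddMonoidAlgebra ℂ ↥Λ) = inF Λ hΛ n hn k φ.1 := rfl

lemma inL_eq_zero_iff (k : ℕ) (φ : ↥(pP d (RL d Λ) n k)) :
    inL Λ hΛ n hn k φ = 0 ↔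
      (φ : MvPowerSeries (Fin d) ℂ) ∈ pP d (RL d Λ) n (k + 1) := by
  constructor
  · intro h
    refine mem_pP_of_supp Λ n φ.2.1 fun u hu => ?_
    have hk : k ≤ wt n u := wt_supp_ge Λ n φ.2 hu
    rcases Nat.lt_or_ge (wt n u) (k+1) with hlt | hge
    · exfalso
      have hwk : wt n u = k := by omega
      have huΛ : u ∈ Λ := φ.2.1 hu
      have := congrArg (fun (x : ↥(HkSub d Λ n k)) =>
        ((x : AddMonoidAlgebra ℂ ↥Λ).coeff (⟨u, huΛ⟩ : ↥Λ))) h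
      simp only [inL_coe, inF_apply] at this
      rw [if_pos hwk] at this
      exact hu (by simpa using this)
    · exact hge
  · intro h
    apply Subtype.ext
    apply AddMonoidAlgebra.ext; apply Finsupp.ext; intro u
    rw [inL_coe, inF_apply]
    show _ = (0 : AddMonoidAlgebra ℂ ↥Λ).coeff u
    rw [AddMonoidAlgebra.coeff_zero, Finsupp.coe_zero, Pi.zero_apply]
    split
    · rename_i hw
      by_contra hne
      have hu : (u : Fin d → ℕ) ∈ suppS d (φ : MvPowerSeries (Fin d) ℂ) := hne
      have := wt_supp_ge Λ n h hu
      omega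
    · rfl

/-- Monomial power series. -/
def monΛ (u : Fin d → ℕ) : MvPowerSeries (Fin d) ℂ :=
  MvPowerSeries.monomial (Finsupp.equivFunOnFinite.symm u) 1

lemma coeffFun_monΛ (u v : Fin d → ℕ) :
    coeffFun d (monΛ u) v = if v = u then 1 else 0 := by
  rw [coeffFun, monΛ, MvPowerSeries.coeff_monomial]
  by_cases h : v = u
  · rw [if_pos h, if_pos (by rw [h])]
  · rw [if_neg h, if_neg (fun he => h (by simpa using congrArg Finsupp.equivFunOnFinite he))]

lemma suppS_monΛ (u : Fin d → ℕ) : suppS d (monΛ u) = {u} := by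
  ext v
  simp [suppS, coeffFun_monΛ]

lemma monΛ_mem_pP {u : Fin d → ℕ} (huΛ : u ∈ Λ) :
    monΛ u ∈ pP d (RL d Λ) n (wt n u) := by
  refine mem_pP_of_supp Λ n ?_ ?_
  · rw [mem_RL, suppS_monΛ]
    exact Set.singleton_subset_iff.mpr huΛ
  · intro v hv
    rw [suppS_monΛ] at hv
    rw [Set.mem_singleton_iff.mp hv]

lemma inF_monΛ (u : ↥Λ) :
    inF Λ hΛ n hn (wt n (u : Fin d → ℕ)) (monΛ (u : Fin d → ℕ))
      = AddMonoidAlgebra.single u 1 := by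
  apply AddMonoidAlgebra.ext; apply Finsupp.ext; intro v
  rw [inF_apply, AddMonoidAlgebra.coeff_single_apply, coeffFun_monΛ]
  by_cases h : u = v
  · rw [if_pos h, ← h, if_pos rfl, if_pos rfl]
  · rw [if_neg h]
    split
    · rw [if_neg (fun he => h (Subtype.ext (by rw [he])).symm)]
    · rfl

/-- The initial-form map on the quotient `p_k/p_{k+1}`. -/
def inQ (k : ℕ) : grPiece d (RL d Λ) n k →ₗ[ℂ] ↥(HkSub d Λ n k) :=
  Submodule.liftQ _ (inL Λ hΛ n hn k) (fun φ hφ => by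
    rw [LinearMap.mem_ker, inL_eq_zero_iff]; exact hφ)

lemma inQ_mk (k : ℕ) (φ : ↥(pP d (RL d Λ) n k)) :
    inQ Λ hΛ n hn k (Submodule.Quotient.mk φ) = inL Λ hΛ n hn k φ :=
  Submodule.liftQ_apply _ _ _

lemma inQ_bij (k : ℕ) : Function.Bijective (inQ Λ hΛ n hn k) := by
  constructor
  · rw [← LinearMap.ker_eq_bot, Submodule.eq_bot_iff]
    intro x hx
    obtain ⟨y, rfl⟩ := Submodule.Quotient.mk_surjective _ x
    rw [LinearMap.mem_ker, inQ_mk] at hx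
    rw [Submodule.Quotient.mk_eq_zero, Submodule.mem_comap]
    exact (inL_eq_zero_iff Λ hΛ n hn k y).mp hx
  · intro z
    have key : ∀ x, x ∈ Submodule.span ℂ
        {x : AddMonoidAlgebra ℂ ↥Λ |
          ∃ u : ↥Λ, wt n (u : Fin d → ℕ) = k ∧ x = AddMonoidAlgebra.single u 1} →
        ∃ a : grPiece d (RL d Λ) n k,
          ((inQ Λ hΛ n hn k a : ↥(HkSub d Λ n k)) : AddMonoidAlgebra ℂ ↥Λ) = x := by
      intro x hx
      induction hx using Submodule.span_induction with
      | mem x hx =>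
          obtain ⟨u, hwu, rfl⟩ := hx
          refine ⟨Submodule.Quotient.mk ⟨monΛ (u : Fin d → ℕ), hwu ▸ monΛ_mem_pP Λ n u.2⟩, ?_⟩
          rw [inQ_mk, inL_coe]
          show inF Λ hΛ n hn k (monΛ (u : Fin d → ℕ)) = _
          rw [← hwu, inF_monΛ]
      | zero => exact ⟨0, by rw [map_zero]; rfl⟩
      | add x y hx hy ihx ihy =>
          obtain ⟨a, ha⟩ := ihx
          obtain ⟨b, hb⟩ := ihy
          exact ⟨a + b, by rw [map_add]; show _ + _ = _; rw [ha, hb]⟩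
      | smul c x hx ihx =>
          obtain ⟨a, ha⟩ := ihx
          exact ⟨c • a, by rw [map_smul]; show c • _ = _; rw [ha]⟩
    obtain ⟨a, ha⟩ := key (z : AddMonoidAlgebra ℂ ↥Λ) z.2
    exact ⟨a, Subtype.ext ha⟩

/-- The induced linear equivalence `p_k/p_{k+1} ≃ H_k`. -/
def eIso (k : ℕ) : grPiece d (RL d Λ) n k ≃ₗ[ℂ] ↥(HkSub d Λ n k) :=
  LinearEquiv.ofBijective (inQ Λ hΛ n hn k) (inQ_bij Λ hΛ n hn k)

lemma eIso_mk (k : ℕ) (φ : ↥(pP d (RL d Λ) n k)) :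
    (eIso Λ hΛ n hn k (Submodule.Quotient.mk φ) : AddMonoidAlgebra ℂ ↥Λ)
      = inF Λ hΛ n hn k (φ : MvPowerSeries (Fin d) ℂ) := by
  show ((inQ Λ hΛ n hn k (Submodule.Quotient.mk φ) : ↥(HkSub d Λ n k)) :
      AddMonoidAlgebra ℂ ↥Λ) = _
  rw [inQ_mk, inL_coe]

lemma mem_suppS_of_coeff {φ : MvPowerSeries (Fin d) ℂ} {v : Fin d →₀ ℕ}
    (h : MvPowerSeries.coeff v φ ≠ 0) : Finsupp.equivFunOnFinite v ∈ suppS d φ := by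
  show coeffFun d φ _ ≠ 0
  rw [coeffFun_eq]; exact h

lemma coe_add_subtype (a b : ↥Λ) : ((a + b : ↥Λ) : Fin d → ℕ) = (a : Fin d → ℕ) + b := rfl

lemma inF_mul (k l : ℕ) (φ ψ : MvPowerSeries (Fin d) ℂ)
    (hφ : φ ∈ pP d (RL d Λ) n k) (hψ : ψ ∈ pP d (RL d Λ) n l) :
    inF Λ hΛ n hn (k + l) (φ * ψ) = inF Λ hΛ n hn k φ * inF Λ hΛ n hn l ψ := by
  classical
  have hrhs : inF Λ hΛ n hn k φ * inF Λ hΛ n hn l ψ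
      = ∑ p ∈ (Sk Λ hΛ n hn k) ×ˢ (Sk Λ hΛ n hn l),
          AddMonoidAlgebra.single (p.1 + p.2)
            (coeffFun d φ (p.1 : Fin d → ℕ) * coeffFun d ψ (p.2 : Fin d → ℕ)) := by
    rw [inF, inF, Finset.sum_mul_sum, Finset.sum_product]
    refine Finset.sum_congr rfl fun u _ => Finset.sum_congr rfl fun v _ => ?_
    rw [AddMonoidAlgebra.single_mul_single]
  apply AddMonoidAlgebra.ext; apply Finsupp.ext; intro w
  rw [hrhs, inF_apply, AddMonoidAlgebra.coeff_sum, Finsupp.finset_sum_apply]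
  rw [Finset.sum_congr rfl (fun p _ => AddMonoidAlgebra.coeff_single_apply)]
  by_cases hw : wt n (w : Fin d → ℕ) = k + l
  · rw [if_pos hw]
    rw [show coeffFun d (φ * ψ) (w : Fin d → ℕ)
        = MvPowerSeries.coeff (Finsupp.equivFunOnFinite.symm (w : Fin d → ℕ)) (φ * ψ)
      from rfl]
    rw [MvPowerSeries.coeff_mul]
    refine Finset.sum_bij_ne_zero
      (i := fun p _ hne =>
        (⟨Finsupp.equivFunOnFinite p.1,
            hφ.1 (mem_suppS_of_coeff (left_ne_zero_of_mul hne))⟩,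
         ⟨Finsupp.equivFunOnFinite p.2,
            hψ.1 (mem_suppS_of_coeff (right_ne_zero_of_mul hne))⟩))
      ?_ ?_ ?_ ?_
    · intro p hp hne
      rw [Finset.HasAntidiagonal.mem_antidiagonal] at hp
      have hsum : Finsupp.equivFunOnFinite p.1 + Finsupp.equivFunOnFinite p.2
          = (w : Fin d → ℕ) := by
        have h' := congrArg Finsupp.equivFunOnFinite hp
        rw [Equiv.apply_symm_apply] at h'
        rw [← h']; ext i; simp
      have h1 : k ≤ wt n (Finsupp.equivFunOnFinite p.1) :=
        wt_supp_ge Λ n hφ (mem_suppS_of_coeff (left_ne_zero_of_mul hne))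
      have h2 : l ≤ wt n (Finsupp.equivFunOnFinite p.2) :=
        wt_supp_ge Λ n hψ (mem_suppS_of_coeff (right_ne_zero_of_mul hne))
      have hsw : wt n (Finsupp.equivFunOnFinite p.1) + wt n (Finsupp.equivFunOnFinite p.2)
          = k + l := by rw [← wt_add, hsum, hw]
      rw [Finset.mem_product]
      constructor
      · rw [mem_Sk]; show wt n (Finsupp.equivFunOnFinite p.1) = k; omega
      · rw [mem_Sk]; show wt n (Finsupp.equivFunOnFinite p.2) = l; omega
    · intro p₁ h₁₁ h₁₂ p₂ h₂₁ h₂₂ he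
      rw [Prod.ext_iff] at he ⊢
      obtain ⟨he1, he2⟩ := he
      constructor
      · exact Finsupp.equivFunOnFinite.injective (congrArg Subtype.val he1)
      · exact Finsupp.equivFunOnFinite.injective (congrArg Subtype.val he2)
    · intro b hb hgb
      have hcond : b.1 + b.2 = w := by
        by_contra hc
        exact hgb (if_neg hc)
      have hval : (b.1 : Fin d → ℕ) + (b.2 : Fin d → ℕ) = (w : Fin d → ℕ) := by
        rw [← coe_add_subtype, hcond]
      refine ⟨(Finsupp.equivFunOnFinite.symm (b.1 : Fin d → ℕ),
               Finsupp.equivFunOnFinite.symm (b.2 : Fin d → ℕ)), ?_, ?_, ?_⟩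
      · rw [Finset.HasAntidiagonal.mem_antidiagonal, ← eqf_symm_add, hval]
      · rw [if_pos hcond] at hgb
        show ¬ (MvPowerSeries.coeff (Finsupp.equivFunOnFinite.symm (b.1 : Fin d → ℕ)) φ *
          MvPowerSeries.coeff (Finsupp.equivFunOnFinite.symm (b.2 : Fin d → ℕ)) ψ) = 0
        exact hgb
      · rw [Prod.ext_iff]
        constructor
        · apply Subtype.ext
          show Finsupp.equivFunOnFinite (Finsupp.equivFunOnFinite.symm _) = _
          rw [Equiv.apply_symm_apply]
        · apply Subtype.ext
          show Finsupp.equivFunOnFinite (Finsupp.equivFunOnFinite.symm _) = _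
          rw [Equiv.apply_symm_apply]
    · intro p hp hne
      have hp' := Finset.HasAntidiagonal.mem_antidiagonal.mp hp
      have hsum : (⟨Finsupp.equivFunOnFinite p.1,
            hφ.1 (mem_suppS_of_coeff (left_ne_zero_of_mul hne))⟩ : ↥Λ)
          + ⟨Finsupp.equivFunOnFinite p.2,
            hψ.1 (mem_suppS_of_coeff (right_ne_zero_of_mul hne))⟩ = w := by
        apply Subtype.ext
        rw [coe_add_subtype]
        show Finsupp.equivFunOnFinite p.1 + Finsupp.equivFunOnFinite p.2 = _
        have h' := congrArg Finsupp.equivFunOnFinite hp'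
        rw [Equiv.apply_symm_apply] at h'
        rw [← h']; ext i; simp
      rw [if_pos hsum]
      show _ = coeffFun d φ (Finsupp.equivFunOnFinite p.1)
          * coeffFun d ψ (Finsupp.equivFunOnFinite p.2)
      rw [coeffFun_eq, coeffFun_eq]
  · rw [if_neg hw]
    symm
    apply Finset.sum_eq_zero
    intro p hp
    rw [Finset.mem_product] at hp
    rw [if_neg]
    intro he
    apply hw
    rw [← he, coe_add_subtype, wt_add, (mem_Sk Λ hΛ n hn).mp hp.1, (mem_Sk Λ hΛ n hn).mp hp.2]

lemma coeffFun_one (u : Fin d → ℕ) :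
    coeffFun d (1 : MvPowerSeries (Fin d) ℂ) u = if u = 0 then 1 else 0 := by
  rw [coeffFun, MvPowerSeries.coeff_one]
  by_cases h : u = 0
  · rw [if_pos h, if_pos (by rw [h]; ext i; simp)]
  · rw [if_neg h, if_neg (fun he => h (by have := congrArg Finsupp.equivFunOnFinite he; rw [Equiv.apply_symm_apply] at this; exact this.trans (funext fun _ => rfl)))]

lemma inF_one : inF Λ hΛ n hn 0 (1 : MvPowerSeries (Fin d) ℂ) = 1 := by
  apply AddMonoidAlgebra.ext; apply Finsupp.ext; intro u
  rw [inF_apply]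
  rw [show (1 : AddMonoidAlgebra ℂ ↥Λ) = AddMonoidAlgebra.single 0 1 from rfl]
  rw [AddMonoidAlgebra.coeff_single_apply, coeffFun_one]
  by_cases h : u = (0 : ↥Λ)
  · subst h
    rw [if_pos (show ((0 : ↥Λ) : Fin d → ℕ) = 0 from rfl), if_pos rfl,
      if_pos (show wt n ((0 : ↥Λ) : Fin d → ℕ) = 0 from wt_zero n)]
  · have h1 : ¬ ((0 : ↥Λ) = u) := fun he => h he.symm
    have h2 : ¬ ((u : Fin d → ℕ) = 0) := fun he => h (Subtype.ext he)
    rw [if_neg h1, if_neg h2]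
    split <;> rfl

lemma isIso : IsGradedInitialFormIso d (RL d Λ) Λ n (fun k => eIso Λ hΛ n hn k) := by
  refine ⟨?_, ?_, ?_⟩
  · intro k φ hφ
    funext u
    show (eIso Λ hΛ n hn k (Submodule.Quotient.mk ⟨φ, hφ⟩) : AddMonoidAlgebra ℂ ↥Λ).coeff u = _
    rw [eIso_mk Λ hΛ n hn k ⟨φ, hφ⟩, inF_apply]
  · intro k l φ ψ hφ hψ hφψ
    rw [eIso_mk Λ hΛ n hn (k + l) ⟨φ * ψ, hφψ⟩, eIso_mk Λ hΛ n hn k ⟨φ, hφ⟩,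
      eIso_mk Λ hΛ n hn l ⟨ψ, hψ⟩]
    exact inF_mul Λ hΛ n hn k l φ ψ hφ hψ
  · intro h1
    rw [eIso_mk Λ hΛ n hn 0 ⟨1, h1⟩]
    exact inF_one Λ hΛ n hn

/-- Elements vanishing in degree `k`. -/
def offDeg (k : ℕ) : Submodule ℂ (AddMonoidAlgebra ℂ ↥Λ) where
  carrier := {x | ∀ u : ↥Λ, wt n (u : Fin d → ℕ) = k → x.coeff u = 0}
  zero_mem' := fun _ _ => rfl
  add_mem' := by
    intro a b ha hb u hu
    rw [AddMonoidAlgebra.coeff_add, Finsupp.add_apply, ha u hu, hb u hu, add_zero]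
  smul_mem' := by
    intro c a ha u hu
    rw [AddMonoidAlgebra.coeff_smul, Finsupp.smul_apply, ha u hu, smul_zero]

lemma hksub_le_offDeg {j k : ℕ} (h : j ≠ k) : HkSub d Λ n j ≤ offDeg Λ n k := by
  apply Submodule.span_le.mpr
  rintro x ⟨u, hu, rfl⟩ v hv
  show (AddMonoidAlgebra.single u 1).coeff v = 0
  rw [AddMonoidAlgebra.coeff_single_apply, if_neg]
  intro he
  exact h (by rw [← hu, he, hv])

set_option maxHeartbeats 1000000 in
lemma hk_indep : iSupIndep (fun k => HkSub d Λ n k) := by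
  intro k
  rw [Submodule.disjoint_def]
  intro x hx hx'
  have hle : (⨆ j, ⨆ _ : j ≠ k, HkSub d Λ n j) ≤ offDeg Λ n k :=
    iSup_le fun j => iSup_le fun hj => hksub_le_offDeg Λ n hj
  have h2 : x ∈ offDeg Λ n k := hle hx'
  apply AddMonoidAlgebra.ext; apply Finsupp.ext; intro u
  show x.coeff u = (0 : AddMonoidAlgebra ℂ ↥Λ).coeff u
  rw [show (0 : AddMonoidAlgebra ℂ ↥Λ).coeff u = 0 from rfl]
  by_cases h : wt n (u : Fin d → ℕ) = k
  · exact h2 u h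
  · exact hksub_le_offDeg Λ n (fun he => h he.symm) hx u rfl

lemma single_eq_smul (u : ↥Λ) (c : ℂ) :
    AddMonoidAlgebra.single u c = c • AddMonoidAlgebra.single u (1 : ℂ) := by
  rw [AddMonoidAlgebra.smul_single', mul_one]

lemma hk_sup_top : (⨆ k, HkSub d Λ n k) = ⊤ := by
  rw [eq_top_iff]
  intro f _
  have hf : f = ∑ u ∈ f.coeff.support, AddMonoidAlgebra.single u (f.coeff u) :=
    (AddMonoidAlgebra.sum_coeff_single f).symm
  rw [hf]
  refine Submodule.sum_mem _ fun u _ => ?_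
  rw [single_eq_smul]
  refine Submodule.smul_mem _ _ ?_
  exact Submodule.mem_iSup_of_mem (wt n (u : Fin d → ℕ))
    (Submodule.subset_span ⟨u, rfl, rfl⟩)

lemma hk_internal : DirectSum.IsInternal (fun k : ℕ => HkSub d Λ n k) :=
  (DirectSum.isInternal_submodule_iff_iSupIndep_and_iSup_eq_top _).mpr
    ⟨hk_indep Λ n, hk_sup_top Λ n⟩

/-- Elements with vanishing constant term. -/
def Wz : Submodule ℂ (AddMonoidAlgebra ℂ ↥Λ) where
  carrier := {x | x.coeff (0 : ↥Λ) = 0}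
  zero_mem' := rfl
  add_mem' := by
    intro a b ha hb
    show (a + b).coeff (0 : ↥Λ) = 0
    rw [AddMonoidAlgebra.coeff_add, Finsupp.add_apply, ha, hb, add_zero]
  smul_mem' := by
    intro c a ha
    show (c • a).coeff (0 : ↥Λ) = 0
    rw [AddMonoidAlgebra.coeff_smul, Finsupp.smul_apply, ha, smul_zero]

include hn in
lemma sup_ge1_eq_Wz : (⨆ k, ⨆ _ : 1 ≤ k, HkSub d Λ n k) = Wz Λ := by
  apply le_antisymm
  · refine iSup_le fun k => iSup_le fun hk => ?_
    apply Submodule.span_le.mpr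
    rintro x ⟨u, hu, rfl⟩
    show (AddMonoidAlgebra.single u 1).coeff (0 : ↥Λ) = 0
    rw [AddMonoidAlgebra.coeff_single_apply, if_neg]
    intro he
    rw [he] at hu
    rw [show wt n ((0 : ↥Λ) : Fin d → ℕ) = 0 from wt_zero n] at hu
    omega
  · intro f hf
    have hf0 : f.coeff (0 : ↥Λ) = 0 := hf
    have hfs : f = ∑ u ∈ f.coeff.support, AddMonoidAlgebra.single u (f.coeff u) :=
      (AddMonoidAlgebra.sum_coeff_single f).symm
    rw [hfs]
    refine Submodule.sum_mem _ fun u hu => ?_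
    have hu0 : u ≠ 0 := by
      intro h
      rw [h] at hu
      exact (Finsupp.mem_support_iff.mp hu) hf0
    have hw : 1 ≤ wt n (u : Fin d → ℕ) :=
      hn (u : Fin d → ℕ) u.2 (fun h => hu0 (Subtype.ext h))
    rw [single_eq_smul]
    refine Submodule.smul_mem _ _ ?_
    exact Submodule.mem_iSup_of_mem (wt n (u : Fin d → ℕ))
      (Submodule.mem_iSup_of_mem hw (Submodule.subset_span ⟨u, rfl, rfl⟩))

lemma sub_add_zero {a b : ↥Λ} (h : a + b = 0) : b = 0 := by
  apply Subtype.ext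
  have hc : (a : Fin d → ℕ) + (b : Fin d → ℕ) = 0 := by
    rw [← coe_add_subtype, h]; rfl
  funext i
  have := congrFun hc i
  show (b : Fin d → ℕ) i = 0
  simp only [Pi.add_apply, Pi.zero_apply] at this
  omega

lemma mIdl_le_Wz : (mIdl d Λ : Set (AddMonoidAlgebra ℂ ↥Λ)) ⊆ (Wz Λ : Set _) := by
  intro x hx
  rw [SetLike.mem_coe] at hx
  rw [SetLike.mem_coe]
  induction hx using Submodule.span_induction with
  | mem x hx =>
      obtain ⟨u, hu, rfl⟩ := hx
      show (AddMonoidAlgebra.single u 1).coeff (0 : ↥Λ) = 0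
      rw [AddMonoidAlgebra.coeff_single_apply, if_neg (fun he => hu he)]
  | zero => exact (Wz Λ).zero_mem
  | add x y hx hy ihx ihy => exact (Wz Λ).add_mem ihx ihy
  | smul r x hx ih =>
      show (r • x).coeff (0 : ↥Λ) = 0
      rw [smul_eq_mul]
      by_contra h
      have h0 : (0 : ↥Λ) ∈ (r * x).coeff.support := Finsupp.mem_support_iff.mpr h
      have := AddMonoidAlgebra.support_coeff_mul_subset r x h0
      rw [Finset.mem_add] at this
      obtain ⟨a, _, b, hb, hab⟩ := this
      have hb0 : b = 0 := sub_add_zero Λ hab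
      rw [hb0] at hb
      exact (Finsupp.mem_support_iff.mp hb) ih

lemma Wz_le_mIdl : (Wz Λ : Set (AddMonoidAlgebra ℂ ↥Λ)) ⊆ (mIdl d Λ : Set _) := by
  intro f hf
  rw [SetLike.mem_coe] at hf ⊢
  have hf0 : f.coeff (0 : ↥Λ) = 0 := hf
  have hfs : f = ∑ u ∈ f.coeff.support, AddMonoidAlgebra.single u (f.coeff u) :=
    (AddMonoidAlgebra.sum_coeff_single f).symm
  rw [hfs]
  refine Submodule.sum_mem _ fun u hu => ?_
  have hu0 : u ≠ 0 := by
    intro h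
    rw [h] at hu
    exact (Finsupp.mem_support_iff.mp hu) hf0
  have : AddMonoidAlgebra.single u (f.coeff u)
      = AddMonoidAlgebra.single (0 : ↥Λ) (f.coeff u) * AddMonoidAlgebra.single u 1 := by
    rw [AddMonoidAlgebra.single_mul_single, zero_add, mul_one]
  rw [this]
  exact Ideal.mul_mem_left _ _ (Ideal.subset_span ⟨u, hu0, rfl⟩)

include hn in
lemma sup_eq_mIdl :
    ((⨆ k : ℕ, ⨆ _ : 1 ≤ k, HkSub d Λ n k : Submodule ℂ (AddMonoidAlgebra ℂ ↥Λ)) :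
      Set (AddMonoidAlgebra ℂ ↥Λ)) = (mIdl d Λ : Set (AddMonoidAlgebra ℂ ↥Λ)) := by
  rw [sup_ge1_eq_Wz Λ n hn]
  exact Set.Subset.antisymm (Wz_le_mIdl Λ) (mIdl_le_Wz Λ)

end Main

end GrAux

/-- for two weight vectors `n, n'` positive on `Λ \ {0}`, the associated
graded rings `⨁ p_k(n)/p_{k+1}(n)` and `⨁ p_k(n')/p_{k+1}(n')`, regarded as (ungraded)
`ℂ`-algebras, are isomorphic — both are isomorphic to `AddMonoidAlgebra ℂ Λ` via the
initial-form isomorphisms, matching the maximal graded ideals `⨁_{k ≥ 1}` with `𝔪_Λ` on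
both sides. -/
theorem gr_independent_of_divisor (d : ℕ) (hd : 1 ≤ d) (Λ : AddSubmonoid (Fin d → ℕ))
    (hΛ : Λ.FG) (n n' : Fin d → ℕ)
    (hn : ∀ u ∈ Λ, u ≠ (0 : Fin d → ℕ) → 0 < wt n u)
    (hn' : ∀ u ∈ Λ, u ≠ (0 : Fin d → ℕ) → 0 < wt n' u) :
    ∃ (e : ∀ k : ℕ, grPiece d (RL d Λ) n k ≃ₗ[ℂ] ↥(HkSub d Λ n k))
      (e' : ∀ k : ℕ, grPiece d (RL d Λ) n' k ≃ₗ[ℂ] ↥(HkSub d Λ n' k)),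
      IsGradedInitialFormIso d (RL d Λ) Λ n e ∧
      IsGradedInitialFormIso d (RL d Λ) Λ n' e' ∧
      DirectSum.IsInternal (fun k : ℕ => HkSub d Λ n k) ∧
      DirectSum.IsInternal (fun k : ℕ => HkSub d Λ n' k) ∧
      ((⨆ k : ℕ, ⨆ _ : 1 ≤ k, HkSub d Λ n k : Submodule ℂ (AddMonoidAlgebra ℂ ↥Λ)) :
          Set (AddMonoidAlgebra ℂ ↥Λ)) = (mIdl d Λ : Set (AddMonoidAlgebra ℂ ↥Λ)) ∧
      ((⨆ k : ℕ, ⨆ _ : 1 ≤ k, HkSub d Λ n' k : Submodule ℂ (AddMonoidAlgebra ℂ ↥Λ)) :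
          Set (AddMonoidAlgebra ℂ ↥Λ)) = (mIdl d Λ : Set (AddMonoidAlgebra ℂ ↥Λ)) := by
  exact ⟨fun k => GrAux.eIso Λ hΛ n hn k, fun k => GrAux.eIso Λ hΛ n' hn' k,
    GrAux.isIso Λ hΛ n hn, GrAux.isIso Λ hΛ n' hn',
    GrAux.hk_internal Λ n, GrAux.hk_internal Λ n',
    GrAux.sup_eq_mIdl Λ n hn, GrAux.sup_eq_mIdl Λ n' hn'⟩
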